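/- The element g = x_0 x_1 x_0^{-1} x_1^{-1} x_0 of F equals x_0 x_1 x_2^{-1}, satisfies Ψ(g) = x_0x_1 (so that g ∈ Ψ^{-1}(F⃗)), and g fixes no point of the open interval (0,1): g(t) ≠ t for every t ∈ (0,1). -/

import Mathlib

set_option maxHeartbeats 1000000

noncomputable section

/-- The unit interval `[0,1]` as a type. -/
abbrev I : Type := Set.Icc (0:ℝ) 1

/-- The underlying function of the generator `x₀` of Thompson's group `F`. -/
def x0fun (t : ℝ) : ℝ := if t ≤ 1/4 then 2*t else if t ≤ 1/2 then t + 1/4 else t/2 + 1/2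

/-- The inverse of `x0fun`. -/
def x0inv (t : ℝ) : ℝ := if t ≤ 1/2 then t/2 else if t ≤ 3/4 then t - 1/4 else 2*t - 1

/-- The underlying function of the generator `x₁` of Thompson's group `F`. -/
def x1fun (t : ℝ) : ℝ :=
  if t ≤ 1/2 then t else if t ≤ 5/8 then 2*t - 1/2 else if t ≤ 3/4 then t + 1/8 else t/2 + 1/2

/-- The inverse of `x1fun`. -/
def x1inv (t : ℝ) : ℝ :=
  if t ≤ 1/2 then t else if t ≤ 3/4 then t/2 + 1/4 else if t ≤ 7/8 then t - 1/8 else 2*t - 1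

/-- The generator `x₀` of Thompson's group `F`, as a bijection of `[0,1]`. -/
def x₀ : Equiv.Perm I where
  toFun t := ⟨x0fun t.1, by
    obtain ⟨h0, h1⟩ := Set.mem_Icc.mp t.2
    simp only [Set.mem_Icc, x0fun]
    split_ifs <;> constructor <;> linarith⟩
  invFun t := ⟨x0inv t.1, by
    obtain ⟨h0, h1⟩ := Set.mem_Icc.mp t.2
    simp only [Set.mem_Icc, x0inv]
    split_ifs <;> constructor <;> linarith⟩
  left_inv t := by
    obtain ⟨h0, h1⟩ := Set.mem_Icc.mp t.2
    apply Subtype.ext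
    show x0inv (x0fun t.1) = t.1
    simp only [x0fun, x0inv]
    split_ifs <;> linarith
  right_inv t := by
    obtain ⟨h0, h1⟩ := Set.mem_Icc.mp t.2
    apply Subtype.ext
    show x0fun (x0inv t.1) = t.1
    simp only [x0fun, x0inv]
    split_ifs <;> linarith

/-- The generator `x₁` of Thompson's group `F`, as a bijection of `[0,1]`. -/
def x₁ : Equiv.Perm I where
  toFun t := ⟨x1fun t.1, by
    obtain ⟨h0, h1⟩ := Set.mem_Icc.mp t.2
    simp only [Set.mem_Icc, x1fun]
    split_ifs <;> constructor <;> linarith⟩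
  invFun t := ⟨x1inv t.1, by
    obtain ⟨h0, h1⟩ := Set.mem_Icc.mp t.2
    simp only [Set.mem_Icc, x1inv]
    split_ifs <;> constructor <;> linarith⟩
  left_inv t := by
    obtain ⟨h0, h1⟩ := Set.mem_Icc.mp t.2
    apply Subtype.ext
    show x1inv (x1fun t.1) = t.1
    simp only [x1fun, x1inv]
    split_ifs <;> linarith
  right_inv t := by
    obtain ⟨h0, h1⟩ := Set.mem_Icc.mp t.2
    apply Subtype.ext
    show x1fun (x1inv t.1) = t.1
    simp only [x1fun, x1inv]
    split_ifs <;> linarith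

/-- Composition in Thompson's group `F` is from left to right: the product `f·g` in the paper
is the function `t ↦ g (f t)`.  In Lean, `Equiv.Perm` multiplication is composition from right
to left: `(f * g) t = f (g t)`.  Hence a paper product `a₁ a₂ ⋯ aₙ` corresponds to the Lean
product `aₙ * ⋯ * a₂ * a₁`.

`x i` is the standard generator `x_i` of Thompson's group `F`: here `x_0, x_1` are the explicit
piecewise-linear maps, and for `i ≥ 1`, `x_{i+1} = x_0^{-i} x_1 x_0^{i}` (left-to-right
composition), which in Lean's convention is `x₀ ^ i * x₁ * (x₀ ^ i)⁻¹`. -/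
def x (i : ℕ) : Equiv.Perm I := if i = 0 then x₀ else x₀ ^ (i-1) * x₁ * (x₀ ^ (i-1))⁻¹

/-- Thompson's group `F`, realized as the group of increasing piecewise-linear homeomorphisms of
`[0,1]` with dyadic breakpoints and slopes powers of 2; it is generated by `x_0` and `x_1`. -/
def F : Subgroup (Equiv.Perm I) := Subgroup.closure {x 0, x 1}

/-- The subgroup `G = ⟨x_0x_2, x_1x_2⟩` of `F` (products written left-to-right, so
`x_0x_2` is the Lean element `x 2 * x 0`). -/
def G : Subgroup (Equiv.Perm I) := Subgroup.closure {x 2 * x 0, x 2 * x 1}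

/-- Jones' subgroup `F⃗ = ⟨x_0x_1, x_1x_2, x_2x_3⟩` of `F` (products written left-to-right). -/
def JonesF : Subgroup (Equiv.Perm I) := Subgroup.closure {x 1 * x 0, x 2 * x 1, x 3 * x 2}

lemma x_mem_F (i : ℕ) : x i ∈ F := by
  have h0 : x 0 ∈ F := Subgroup.subset_closure (by simp)
  have h1 : x 1 ∈ F := Subgroup.subset_closure (by simp)
  have hx0 : x₀ ∈ F := by simpa [x] using h0
  have hx1 : x₁ ∈ F := by simpa [x] using h1
  rcases Nat.eq_zero_or_pos i with h | h
  · subst h; exact h0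
  · have : x i = x₀ ^ (i-1) * x₁ * (x₀ ^ (i-1))⁻¹ := by
      simp [x, Nat.pos_iff_ne_zero.mp h]
    rw [this]
    exact mul_mem (mul_mem (pow_mem hx0 _) hx1) (inv_mem (pow_mem hx0 _))

lemma y0_mem_G : x 2 * x 0 ∈ G := Subgroup.subset_closure (by simp)

lemma y1_mem_G : x 2 * x 1 ∈ G := Subgroup.subset_closure (by simp)

/-- The length `|w|` of an element of `F`: the minimal `n` such that `w` is a product of `n`
elements of `{x_i^{±1} : i ≥ 0}`.  This equals the length of the normal form of `w`. -/
def len (w : Equiv.Perm I) : ℕ :=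
  sInf {n | ∃ l : List (Equiv.Perm I), l.length = n ∧
    (∀ a ∈ l, ∃ i : ℕ, a = x i ∨ a = (x i)⁻¹) ∧ l.prod = w}

/-- The element of `F` given by the positive word `x_{i_1} x_{i_2} ⋯ x_{i_n}` (composition from
left to right), where `l = [i_1, i_2, …, i_n]`.  Since Lean's multiplication of permutations is
composition from right to left, this is the Lean product of the reversed list of letters. -/
def pp (l : List ℕ) : Equiv.Perm I := ((l.map x).reverse).prod

/-- `l = [i_1, …, i_n]` encodes a *block*: a positive normal form `x_{i_1}⋯x_{i_n}`
(so `i_1 ≤ ⋯ ≤ i_n`) with `i_1 ≠ i_n` and `i_j < i_1 + j` for all `j = 1, …, n`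
(here with 0-based indexing: `l[k] < l[0] + k + 1`). -/
def IsBlock (l : List ℕ) : Prop :=
  l ≠ [] ∧ l.Pairwise (· ≤ ·) ∧ l.headI ≠ l.getLastD 0 ∧
    ∀ k < l.length, l.getD k 0 < l.headI + k + 1

/-- The double coset `F⃗ a F⃗` of Jones' subgroup.  (As a set this does not depend on the
composition convention, since `u, v` range over all of `F⃗`.) -/
def dCoset (a : Equiv.Perm I) : Set (Equiv.Perm I) :=
  {w | ∃ u ∈ JonesF, ∃ v ∈ JonesF, w = v * a * u}

/-- A real number is dyadic if it has the form `a / 2^n` with `a, n` natural numbers. -/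
def IsDyadic (α : ℝ) : Prop := ∃ (a : ℕ) (n : ℕ), α = a / 2^n

/-- The subgroup of all permutations fixing every point of `U`. -/
def fixing (U : Set ℝ) : Subgroup (Equiv.Perm I) where
  carrier := {g | ∀ t : I, (t : ℝ) ∈ U → g t = t}
  one_mem' := fun _ _ => rfl
  mul_mem' := by
    intro a b ha hb t ht
    simp only [Equiv.Perm.mul_apply]
    rw [hb t ht, ha t ht]
  inv_mem' := by
    intro a ha t ht
    conv_lhs => rw [← ha t ht]
    exact a.symm_apply_apply t

/-- `H_U`: the stabilizer in `F` of the finite set `U ⊂ (0,1)`, i.e. the subgroup of all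
elements of `F` fixing every point of `U`. -/
def HU (U : Set ℝ) : Subgroup (Equiv.Perm I) := F ⊓ fixing U

/-- The element `g = x_0 x_1 x_0⁻¹ x_1⁻¹ x_0` of `F` (written left-to-right in the paper;
in Lean's right-to-left convention it is `x 0 * (x 1)⁻¹ * (x 0)⁻¹ * x 1 * x 0`). -/
def g13 : Equiv.Perm I := x 0 * (x 1)⁻¹ * (x 0)⁻¹ * x 1 * x 0

lemma g13_mem_F : g13 ∈ F := by
  unfold g13
  exact mul_mem (mul_mem (mul_mem (mul_mem (x_mem_F 0) (inv_mem (x_mem_F 1)))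
    (inv_mem (x_mem_F 0))) (x_mem_F 1)) (x_mem_F 0)

lemma x0_def : x 0 = x₀ := by simp [x]
lemma x1_def : x 1 = x₁ := by simp [x]
lemma x2_def : x 2 = x₀ * x₁ * x₀⁻¹ := by simp [x]

lemma x0_apply (t : I) : (x₀ t : ℝ) = x0fun t := rfl
lemma x0_inv_apply (t : I) : ((x₀⁻¹ : Equiv.Perm I) t : ℝ) = x0inv t := rfl
lemma x1_apply (t : I) : (x₁ t : ℝ) = x1fun t := rfl
lemma x1_inv_apply (t : I) : ((x₁⁻¹ : Equiv.Perm I) t : ℝ) = x1inv t := rfl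
variable {t : ℝ}

lemma A1 (h0 : 0 ≤ t) (h1 : t ≤ 1) :
    x0inv (x1inv t) = if t ≤ 3/4 then t/2 else if t ≤ 7/8 then t - 3/8 else 4*t - 3 := by
  simp only [x0inv, x1inv]; split_ifs <;> linarith

lemma A2 (h0 : 0 ≤ t) (h1 : t ≤ 1) :
    x1fun (x0inv (x1inv t)) = if t ≤ 3/4 then t/2 else if t ≤ 7/8 then t - 3/8
      else if t ≤ 29/32 then 8*t - 13/2 else if t ≤ 15/16 then 4*t - 23/8 else 2*t - 1 := by
  rw [A1 h0 h1]; simp only [x1fun]; split_ifs <;> linarith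

lemma A3 (h0 : 0 ≤ t) (h1 : t ≤ 1) :
    x0fun (x1fun (x0inv (x1inv t))) = if t ≤ 1/2 then t else if t ≤ 3/4 then t/2 + 1/4
      else if t ≤ 7/8 then t - 1/8 else if t ≤ 29/32 then 4*t - 11/4
      else if t ≤ 15/16 then 2*t - 15/16 else t := by
  rw [A2 h0 h1]; simp only [x0fun]; split_ifs <;> linarith

lemma A4 (h0 : 0 ≤ t) (h1 : t ≤ 1) :
    x1fun (x0fun (x1fun (x0inv (x1inv t)))) = if t ≤ 7/8 then t
      else if t ≤ 29/32 then 2*t - 7/8 else if t ≤ 15/16 then t + 1/32 else t/2 + 1/2 := by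
  rw [A3 h0 h1]; simp only [x1fun]; split_ifs <;> linarith

lemma B1 (h0 : 0 ≤ t) (h1 : t ≤ 1) :
    x0inv (x0inv t) = if t ≤ 1/2 then t/4 else if t ≤ 3/4 then t/2 - 1/8
      else if t ≤ 7/8 then 2*t - 5/4 else 4*t - 3 := by
  simp only [x0inv]; split_ifs <;> linarith

lemma B2 (h0 : 0 ≤ t) (h1 : t ≤ 1) :
    x1fun (x0inv (x0inv t)) = if t ≤ 1/2 then t/4 else if t ≤ 3/4 then t/2 - 1/8
      else if t ≤ 7/8 then 2*t - 5/4 else if t ≤ 29/32 then 8*t - 13/2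
      else if t ≤ 15/16 then 4*t - 23/8 else 2*t - 1 := by
  rw [B1 h0 h1]; simp only [x1fun]; split_ifs <;> linarith

lemma B3 (h0 : 0 ≤ t) (h1 : t ≤ 1) :
    x0fun (x1fun (x0inv (x0inv t))) = if t ≤ 1/2 then t/2 else if t ≤ 3/4 then t - 1/4
      else if t ≤ 7/8 then 2*t - 1 else if t ≤ 29/32 then 4*t - 11/4
      else if t ≤ 15/16 then 2*t - 15/16 else t := by
  rw [B2 h0 h1]; simp only [x0fun]; split_ifs <;> linarith

lemma B4 (h0 : 0 ≤ t) (h1 : t ≤ 1) :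
    x0fun (x0fun (x1fun (x0inv (x0inv t)))) = if t ≤ 7/8 then t
      else if t ≤ 29/32 then 2*t - 7/8 else if t ≤ 15/16 then t + 1/32 else t/2 + 1/2 := by
  rw [B3 h0 h1]; simp only [x0fun]; split_ifs <;> linarith

lemma C1 (h0 : 0 ≤ t) (h1 : t ≤ 1) :
    x1fun (x0fun t) = if t ≤ 3/8 then 2*t else if t ≤ 1/2 then t + 3/8 else t/4 + 3/4 := by
  simp only [x0fun, x1fun]; split_ifs <;> linarith

lemma C2 (h0 : 0 ≤ t) (h1 : t ≤ 1) :
    x0inv (x1fun (x0fun t)) = if t ≤ 1/4 then t else if t ≤ 1/2 then 2*t - 1/4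
      else t/2 + 1/2 := by
  rw [C1 h0 h1]; simp only [x0inv]; split_ifs <;> linarith

lemma C3 (h0 : 0 ≤ t) (h1 : t ≤ 1) :
    x1inv (x0inv (x1fun (x0fun t))) = if t ≤ 1/4 then t else if t ≤ 3/8 then 2*t - 1/4
      else if t ≤ 1/2 then t + 1/8 else if t ≤ 3/4 then t/2 + 3/8 else t := by
  rw [C2 h0 h1]; simp only [x1inv]; split_ifs <;> linarith

lemma C4 (h0 : 0 ≤ t) (h1 : t ≤ 1) :
    x0fun (x1inv (x0inv (x1fun (x0fun t)))) = if t ≤ 3/8 then 2*t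
      else if t ≤ 1/2 then t/2 + 9/16 else if t ≤ 3/4 then t/4 + 11/16 else t/2 + 1/2 := by
  rw [C3 h0 h1]; simp only [x0fun]; split_ifs <;> linarith

lemma rel : x₁ * x₀ * x₁ * x₀⁻¹ * x₁⁻¹ = x₀ * x₀ * x₁ * x₀⁻¹ * x₀⁻¹ := by
  apply Equiv.ext; intro s
  obtain ⟨h0, h1⟩ := Set.mem_Icc.mp s.2
  apply Subtype.ext
  show x1fun (x0fun (x1fun (x0inv (x1inv s.1)))) = x0fun (x0fun (x1fun (x0inv (x0inv s.1))))
  rw [A4 h0 h1, B4 h0 h1]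

lemma part1 : g13 = (x 2)⁻¹ * x 1 * x 0 := by
  unfold g13; rw [x0_def, x1_def, x2_def]; group

lemma g13_apply (s : I) : (g13 s : ℝ) = x0fun (x1inv (x0inv (x1fun (x0fun s.1)))) := by
  have h : g13 = x₀ * x₁⁻¹ * x₀⁻¹ * x₁ * x₀ := by unfold g13; rw [x0_def, x1_def]
  rw [h]; rfl

/-- The element `g = x_0 x_1 x_0⁻¹ x_1⁻¹ x_0` equals `x_0 x_1 x_2⁻¹`, satisfies
`Ψ(g) = x_0x_1 ∈ F⃗` (so that `g ∈ Ψ⁻¹(F⃗)`), and fixes no point of `(0,1)`.  (Paper words are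
left-to-right: `x_0 x_1 x_2⁻¹` is the Lean element `(x 2)⁻¹ * x 1 * x 0`, and `x_0x_1` is
`x 1 * x 0`.) -/
theorem stmt13 (Ψ : ↥F ≃* ↥G)
    (hΨ0 : (Ψ ⟨x 0, x_mem_F 0⟩ : Equiv.Perm I) = x 2 * x 0)
    (hΨ1 : (Ψ ⟨x 1, x_mem_F 1⟩ : Equiv.Perm I) = x 2 * x 1) :
    g13 = (x 2)⁻¹ * x 1 * x 0 ∧
    (Ψ ⟨g13, g13_mem_F⟩ : Equiv.Perm I) = x 1 * x 0 ∧
    x 1 * x 0 ∈ JonesF ∧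
    (∀ (t : ℝ) (h0 : 0 < t) (h1 : t < 1),
      g13 ⟨t, Set.mem_Icc.mpr ⟨h0.le, h1.le⟩⟩ ≠ ⟨t, Set.mem_Icc.mpr ⟨h0.le, h1.le⟩⟩) := by

  refine ⟨part1, ?_, Subgroup.subset_closure (Set.mem_insert _ _), ?_⟩
  · have hg : (⟨g13, g13_mem_F⟩ : F) = ⟨x 0, x_mem_F 0⟩ * (⟨x 1, x_mem_F 1⟩)⁻¹ *
        (⟨x 0, x_mem_F 0⟩)⁻¹ * ⟨x 1, x_mem_F 1⟩ * ⟨x 0, x_mem_F 0⟩ := by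
      apply Subtype.ext
      simp only [Subgroup.coe_mul, InvMemClass.coe_inv]
      rfl
    rw [hg]
    simp only [map_mul, map_inv, Subgroup.coe_mul, InvMemClass.coe_inv]
    rw [hΨ0, hΨ1, x0_def, x1_def, x2_def]
    calc (x₀ * x₁ * x₀⁻¹ * x₀) * (x₀ * x₁ * x₀⁻¹ * x₁)⁻¹ * (x₀ * x₁ * x₀⁻¹ * x₀)⁻¹ *
          (x₀ * x₁ * x₀⁻¹ * x₁) * (x₀ * x₁ * x₀⁻¹ * x₀)
        = (x₀ ^ 2 * x₁ * x₀⁻¹ * x₀⁻¹)⁻¹ * (x₁ * x₀ * x₁) := by group; rw [zpow_two]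
      _ = (x₁ * x₀ * x₁ * x₀⁻¹ * x₁⁻¹)⁻¹ * (x₁ * x₀ * x₁) := by rw [rel, sq]
      _ = x₁ * x₀ := by group
  · intro t h0 h1 heq
    have h := congrArg Subtype.val heq
    rw [g13_apply, C4 h0.le h1.le] at h
    simp only at h
    split_ifs at h <;> linarith
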